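/- arXiv:2403.02802 — 5 statements merged into one kernel-verified Lean document; each statement's English description precedes it below -/
import Mathlib

section
/- Let p, q, c be real numbers with 0 < q ≤ p < 1 and 0 < c ≤ 1. For t ∈ [0,1] define f(t) = 2 − (p^t q^{1−t} + q^t p^{1−t})·c − (1−pc)^t (1−qc)^{1−t} − (1−qc)^t (1−pc)^{1−t}. Then the supremum of f over [0,1] is attained at t = 1/2 and equals 2·(1 − √(pq)·c − √((1−pc)(1−qc))). -/
lemma amgm_rpow (x y t : ℝ) (hx : 0 < x) (hy : 0 < y) :
    2 * Real.sqrt (x * y) ≤ x ^ t * y ^ (1 - t) + y ^ t * x ^ (1 - t) := by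
  set a := x ^ t * y ^ (1 - t) with ha
  set b := y ^ t * x ^ (1 - t) with hb
  have ha0 : 0 < a := by positivity
  have hb0 : 0 < b := by positivity
  have hab : a * b = x * y := by
    rw [ha, hb]
    rw [show x ^ t * y ^ (1 - t) * (y ^ t * x ^ (1 - t))
        = (x ^ t * x ^ (1 - t)) * (y ^ t * y ^ (1 - t)) by ring,
      ← Real.rpow_add hx, ← Real.rpow_add hy]
    norm_num
  have h1 : x * y ≤ ((a + b) / 2) ^ 2 := by nlinarith [sq_nonneg (a - b)]
  have h2 : Real.sqrt (x * y) ≤ (a + b) / 2 := by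
    calc Real.sqrt (x * y) ≤ Real.sqrt (((a + b) / 2) ^ 2) := Real.sqrt_le_sqrt h1
    _ = (a + b) / 2 := Real.sqrt_sq (by positivity)
  linarith

lemma sqrt_eq_half (x y : ℝ) (hx : 0 < x) (hy : 0 < y) :
    x ^ (1/2 : ℝ) * y ^ (1/2 : ℝ) = Real.sqrt (x * y) := by
  rw [← Real.mul_rpow hx.le hy.le, ← Real.sqrt_eq_rpow]

/-- For `0 < q ≤ p < 1` and `0 < c ≤ 1`, the function
`f(t) = 2 − (p^t q^{1−t} + q^t p^{1−t})·c − (1−pc)^t (1−qc)^{1−t} − (1−qc)^t (1−pc)^{1−t}`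
attains its supremum over `[0,1]` at `t = 1/2`, where it equals
`2·(1 − √(pq)·c − √((1−pc)(1−qc)))`. -/
theorem sup_CH_divergence_at_half (p q c : ℝ)
    (hq : 0 < q) (hqp : q ≤ p) (hp : p < 1) (hc : 0 < c) (hc1 : c ≤ 1)
    (f : ℝ → ℝ)
    (hf : ∀ t : ℝ, f t =
      2 - (p ^ t * q ^ (1 - t) + q ^ t * p ^ (1 - t)) * c
        - (1 - p * c) ^ t * (1 - q * c) ^ (1 - t)
        - (1 - q * c) ^ t * (1 - p * c) ^ (1 - t)) :
    IsGreatest (f '' Set.Icc (0:ℝ) 1) (f (1/2)) ∧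
      f (1/2) = 2 * (1 - Real.sqrt (p * q) * c
        - Real.sqrt ((1 - p * c) * (1 - q * c))) := by
  have hp0 : 0 < p := lt_of_lt_of_le hq hqp
  have hpc : 0 < 1 - p * c := by nlinarith
  have hqc : 0 < 1 - q * c := by nlinarith
  have hval : f (1/2) = 2 * (1 - Real.sqrt (p * q) * c
      - Real.sqrt ((1 - p * c) * (1 - q * c))) := by
    rw [hf]
    norm_num
    rw [sqrt_eq_half p q hp0 hq, sqrt_eq_half q p hq hp0,
      sqrt_eq_half _ _ hpc hqc, sqrt_eq_half _ _ hqc hpc,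
      mul_comm q p]
    ring
  refine ⟨⟨⟨1/2, by norm_num, rfl⟩, ?_⟩, hval⟩
  rintro y ⟨t, ht, rfl⟩
  rw [hf t, hval]
  have h1 := amgm_rpow p q t hp0 hq
  have h2 := amgm_rpow (1 - p * c) (1 - q * c) t hpc hqc
  nlinarith [Real.sqrt_nonneg (p * q), Real.sqrt_nonneg ((1-p*c)*(1-q*c))]
end

section
/- Let b ≥ 2 be an integer and let γ ∈ (0, 1/4]. Then the finite sum ∑_{k=2}^{b−1} (C(b,k) − b) · γ^k · (1−γ)^{b−k} is at least 1 − (1−γ)^b · (1 + 2bγ), where C(b,k) denotes the binomial coefficient. -/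
open Finset in
/-- For an integer `b ≥ 2` and `γ ∈ (0, 1/4]`,
`∑_{k=2}^{b−1} (C(b,k) − b) γ^k (1−γ)^{b−k} ≥ 1 − (1−γ)^b (1 + 2bγ)`. -/
theorem sum_binom_lower_bound (b : ℕ) (hb : 2 ≤ b) (γ : ℝ)
    (hγ : 0 < γ) (hγ4 : γ ≤ 1/4) :
    1 - (1 - γ) ^ b * (1 + 2 * b * γ) ≤
      ∑ k ∈ Finset.Icc 2 (b - 1),
        ((b.choose k : ℝ) - (b : ℝ)) * γ ^ k * (1 - γ) ^ (b - k) := by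
  set x : ℝ := 1 - γ with hxdef
  have hx : 0 < x := by simp only [hxdef]; linarith
  clear_value x
  have hγ0 : (0:ℝ) ≤ γ := hγ.le
  -- Lemma A: geometric-type bound, by induction
  have lemA : ∀ n : ℕ, 1 ≤ n →
      γ * x^(n-1) + (∑ k ∈ Finset.Icc 2 n, γ^k * x^(n-k)) + γ^n/2 ≤ 2*γ*x^n := by
    intro n hn
    induction n, hn using Nat.le_induction with
    | base => simp; nlinarith [hxdef]
    | succ n hn ih =>
      rw [Finset.sum_Icc_succ_top (by omega : 2 ≤ n+1)]
      have hs : ∑ k ∈ Finset.Icc 2 n, γ^k * x^(n+1-k)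
          = x * ∑ k ∈ Finset.Icc 2 n, γ^k * x^(n-k) := by
        rw [Finset.mul_sum]
        refine Finset.sum_congr rfl fun k hk => ?_
        have hk' : k ≤ n := (Finset.mem_Icc.mp hk).2
        rw [show n+1-k = (n-k)+1 from by omega, pow_succ]
        ring
      rw [hs, show n+1-1 = n from rfl, show n+1-(n+1) = 0 from by omega]
      have hxx : x^n = x^(n-1) * x := by
        conv_lhs => rw [show n = (n-1)+1 from by omega, pow_succ]
      rw [pow_succ x n, pow_succ γ n, hxx]
      rw [hxx] at ih
      simp only [pow_zero, mul_one]
      nlinarith [mul_le_mul_of_nonneg_left ih hx.le,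
        mul_nonneg (pow_nonneg hγ0 n) (by linarith : (0:ℝ) ≤ x - 3*γ)]
  -- split lemma
  have hsplitsum : ∀ f : ℕ → ℝ, ∑ k ∈ Finset.range (b+1), f k
      = f 0 + f 1 + (∑ k ∈ Finset.Icc 2 (b-1), f k) + f b := by
    intro f
    obtain ⟨c, rfl⟩ : ∃ c, b = c+2 := ⟨b-2, by omega⟩
    have h1 : Finset.Icc 2 (c+1) = Finset.Ico 2 (c+2) := by exact (Finset.Ico_add_one_right_eq_Icc 2 (c+1)).symm
    rw [show c+2-1 = c+1 from rfl, h1, Finset.sum_Ico_eq_sum_range,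
      show c+2-2 = c from rfl]
    rw [Finset.sum_range_succ' f (c+2), Finset.sum_range_succ' (fun i => f (i+1)) (c+1),
      Finset.sum_range_succ]
    have he : ∀ i, f (2+i) = f (i+1+1) := fun i => by rw [show 2+i=i+1+1 from by omega]
    simp only [he]
    rw [show c+1+1 = c+2 from rfl]
    ring
  -- binomial theorem
  have hbin : (∑ k ∈ Finset.range (b+1), γ^k * x^(b-k) * (b.choose k : ℝ)) = 1 := by
    rw [← add_pow]
    simp [hxdef]
  rw [hsplitsum] at hbin
  simp only [pow_zero, Nat.choose_zero_right, Nat.choose_one_right, Nat.sub_zero,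
    Nat.choose_self, Nat.sub_self, Nat.cast_one, one_mul, mul_one] at hbin
  -- rewrite the goal sum
  have hgoal : ∑ k ∈ Finset.Icc 2 (b-1), ((b.choose k : ℝ) - (b : ℝ)) * γ^k * x^(b-k)
      = (∑ k ∈ Finset.Icc 2 (b-1), γ^k * x^(b-k) * (b.choose k : ℝ))
        - (b:ℝ) * ∑ k ∈ Finset.Icc 2 (b-1), γ^k * x^(b-k) := by
    rw [Finset.mul_sum, ← Finset.sum_sub_distrib]
    refine Finset.sum_congr rfl fun k _ => ?_
    ring
  rw [hgoal]
  -- relate Icc 2 b sum to Icc 2 (b-1) sum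
  have htop : ∑ k ∈ Finset.Icc 2 b, γ^k * x^(b-k)
      = (∑ k ∈ Finset.Icc 2 (b-1), γ^k * x^(b-k)) + γ^b := by
    conv_lhs => rw [show b = (b-1)+1 from by omega]
    rw [Finset.sum_Icc_succ_top (by omega : 2 ≤ (b-1)+1)]
    rw [show (b-1)+1 = b from by omega, Nat.sub_self, pow_zero, mul_one]
  have hA := lemA b (by omega)
  rw [htop] at hA
  have hb' : (2:ℝ) ≤ (b:ℝ) := by exact_mod_cast hb
  have hTnn : 0 ≤ ∑ k ∈ Finset.Icc 2 (b-1), γ^k * x^(b-k) :=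
    Finset.sum_nonneg fun k _ => mul_nonneg (pow_nonneg hγ0 _) (pow_nonneg hx.le _)
  nlinarith [mul_le_mul_of_nonneg_left hA (by linarith : (0:ℝ) ≤ (b:ℝ)),
    pow_nonneg hγ0 b, pow_nonneg hx.le b, pow_nonneg hx.le (b-1),
    mul_nonneg (by linarith : (0:ℝ) ≤ (b:ℝ)-2) (pow_nonneg hγ0 b)]
end

section
/- Let m ≥ 1 be an integer and let a₁,…,a_m, b₁,…,b_m be strictly positive real numbers. On a probability space, let P₁,…,P_m, Q₁,…,Q_m be mutually independent random variables with P_i Poisson-distributed with mean a_i and Q_i Poisson-distributed with mean b_i. Define Y = ∑_{i=1}^m log(a_i/b_i)·(Q_i − P_i). Then for every real u, P(Y ≥ −u) ≤ e^{u/2} · exp( − ∑_{i=1}^m (√(a_i) − √(b_i))² ). -/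
open MeasureTheory ProbabilityTheory Real

lemma tsum_pi_prod : ∀ (n : ℕ) (g : Fin n → ℕ → ENNReal),
    ∑' f : Fin n → ℕ, ∏ i, g i (f i) = ∏ i, ∑' k, g i k := by
  intro n
  induction n with
  | zero => intro g; simp [tsum_fintype]
  | succ n ih =>
    intro g
    rw [← (Fin.consEquiv fun _ => ℕ).tsum_eq, ENNReal.tsum_prod']
    simp only [Fin.consEquiv_apply, Fin.prod_univ_succ,
      Fin.cons_zero, Fin.cons_succ]
    calc ∑' (k : ℕ) (f : Fin n → ℕ), g 0 k * ∏ i, g i.succ (f i)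
        = ∑' (k : ℕ), g 0 k * ∑' f : Fin n → ℕ, ∏ i, g i.succ (f i) := by
          congr 1; ext k; rw [ENNReal.tsum_mul_left]
      _ = (∑' k, g 0 k) * ∑' f : Fin n → ℕ, ∏ i, g i.succ (f i) := ENNReal.tsum_mul_right
      _ = (∑' k, g 0 k) * ∏ i : Fin n, ∑' k, g i.succ k := by rw [ih]

lemma real_exp_tsum (x : ℝ) : ∑' k : ℕ, x ^ k / (Nat.factorial k) = Real.exp x := by
  rw [Real.exp_eq_exp_ℝ, NormedSpace.exp_eq_tsum_div]

lemma poisson_mgf (A r : ℝ) (hA : 0 ≤ A) (hr : 0 ≤ r) :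
    ∑' k : ℕ, ENNReal.ofReal (Real.exp (-A) * A ^ k / (Nat.factorial k)) * ENNReal.ofReal (r ^ k) =
    ENNReal.ofReal (Real.exp (A * r - A)) := by
  have h1 : ∀ k : ℕ, ENNReal.ofReal (Real.exp (-A) * A ^ k / (Nat.factorial k)) *
      ENNReal.ofReal (r ^ k)
      = ENNReal.ofReal (Real.exp (-A) * ((A * r) ^ k / (Nat.factorial k))) := by
    intro k
    rw [← ENNReal.ofReal_mul (by positivity)]
    congr 1
    rw [mul_pow]
    ring
  simp only [h1]
  rw [← ENNReal.ofReal_tsum_of_nonneg (fun k => by positivity)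
    (by simpa using (Real.summable_pow_div_factorial (A * r)).mul_left (Real.exp (-A)))]
  congr 1
  rw [tsum_mul_left, real_exp_tsum, ← Real.exp_add]
  ring_nf

/-- Chernoff tail bound for
`Y = ∑_{i=1}^m log(a_i/b_i)·(Q_i − P_i)` where the `P_i, Q_i` are mutually
independent Poisson random variables with means `a_i` and `b_i`:
`P(Y ≥ −u) ≤ e^{u/2} · exp(−∑_i (√a_i − √b_i)²)` for every real `u`. -/
theorem poisson_linear_comb_tail {Ω : Type*} [MeasurableSpace Ω]
    (P : Measure Ω) [IsProbabilityMeasure P]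
    (m : ℕ) (hm : 1 ≤ m) (a b : Fin m → ℝ)
    (ha : ∀ i, 0 < a i) (hb : ∀ i, 0 < b i)
    (Pv Qv : Fin m → Ω → ℕ)
    (hPv : ∀ i, ∀ k : ℕ, P {ω | Pv i ω = k} =
      ENNReal.ofReal (Real.exp (-(a i)) * (a i) ^ k / (Nat.factorial k)))
    (hQv : ∀ i, ∀ k : ℕ, P {ω | Qv i ω = k} =
      ENNReal.ofReal (Real.exp (-(b i)) * (b i) ^ k / (Nat.factorial k)))
    (hindep : iIndepFun
      (Sum.elim Pv Qv) P)
    (Y : Ω → ℝ)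
    (hY : ∀ ω, Y ω = ∑ i, Real.log (a i / b i) * ((Qv i ω : ℝ) - (Pv i ω : ℝ)))
    (u : ℝ) :
    P {ω | -u ≤ Y ω} ≤
      ENNReal.ofReal (Real.exp (u / 2) *
        Real.exp (-(∑ i, (Real.sqrt (a i) - Real.sqrt (b i)) ^ 2))) := by
  classical
  set c : Fin m → ℝ := fun i => Real.log (a i / b i) with hc
  set val : (Fin m → ℕ) × (Fin m → ℕ) → ℝ :=
    fun v => ∑ i, c i * ((v.2 i : ℝ) - (v.1 i : ℝ)) with hval
  set B : (Fin m → ℕ) × (Fin m → ℕ) → Set Ω :=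
    fun v => ⋂ j : Fin m ⊕ Fin m, (Sum.elim Pv Qv j) ⁻¹' {Sum.elim v.1 v.2 j} with hB
  set E : (Fin m → ℕ) × (Fin m → ℕ) → Set Ω :=
    fun v => if -u ≤ val v then B v else ∅ with hE
  set eR : ℝ → ENNReal := fun x => ENNReal.ofReal (Real.exp x) with heR
  set F : Fin m → ℕ → ENNReal := fun i k => eR (-(c i) * k / 2) *
    ENNReal.ofReal (Real.exp (-(a i)) * (a i) ^ k / (Nat.factorial k)) with hF
  set G : Fin m → ℕ → ENNReal := fun i k => eR (c i * k / 2) *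
    ENNReal.ofReal (Real.exp (-(b i)) * (b i) ^ k / (Nat.factorial k)) with hG
  have e_add : ∀ x y : ℝ, eR (x + y) = eR x * eR y := fun x y => by
    simp only [heR]
    rw [Real.exp_add, ENNReal.ofReal_mul (Real.exp_nonneg _)]
  have ofReal_exp_sum : ∀ (s : Finset (Fin m)) (f : Fin m → ℝ),
      eR (∑ i ∈ s, f i) = ∏ i ∈ s, eR (f i) := by
    intro s f
    induction s using Finset.cons_induction with
    | empty => simp [heR]
    | cons x s hx ih =>
      rw [Finset.sum_cons, Finset.prod_cons, e_add, ih]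
  -- Step 1: inclusion
  have hsub : {ω | -u ≤ Y ω} ⊆ ⋃ v, E v := by
    intro ω hω
    refine Set.mem_iUnion.2 ⟨(fun i => Pv i ω, fun i => Qv i ω), ?_⟩
    have h1 : val (fun i => Pv i ω, fun i => Qv i ω) = Y ω := by
      simp only [hval, hc, hY ω]
    simp only [hE, h1]
    rw [if_pos (show -u ≤ Y ω from hω)]
    simp only [hB, Set.mem_iInter]
    intro j
    cases j with
    | inl i => exact rfl
    | inr i => exact rfl
  -- Step 2: independence gives product formula for B
  have hbase : ∀ v, P (B v) =
      (∏ i, P {ω | Pv i ω = v.1 i}) * (∏ i, P {ω | Qv i ω = v.2 i}) := by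
    intro v
    have h := hindep.measure_inter_preimage_eq_mul (S := Finset.univ)
      (sets := fun j => {Sum.elim v.1 v.2 j}) (fun j _ => measurableSet_singleton _)
    have h2 : (⋂ j ∈ Finset.univ, (Sum.elim Pv Qv j) ⁻¹' {Sum.elim v.1 v.2 j}) = B v := by
      simp [hB]
    rw [h2] at h
    rw [h, Fintype.prod_sum_type]
    rfl
  -- Step 3: pointwise bound
  have hEle : ∀ v, P (E v) ≤ eR ((u + val v) / 2) * P (B v) := by
    intro v
    by_cases h : -u ≤ val v
    · simp only [hE, if_pos h]
      refine le_mul_of_one_le_left zero_le' ?_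
      simp only [heR]
      exact ENNReal.one_le_ofReal.2 (Real.one_le_exp (by linarith))
    · simp [hE, if_neg h]
  -- Step 4: term identity
  have hterm : ∀ v, eR ((u + val v) / 2) * P (B v)
      = eR (u / 2) * ((∏ i, F i (v.1 i)) * (∏ i, G i (v.2 i))) := by
    intro v
    rw [hbase v]
    simp only [hPv, hQv]
    have h1 : (u + val v) / 2
        = u / 2 + ∑ i, (-(c i) * (v.1 i : ℝ) / 2 + c i * (v.2 i : ℝ) / 2) := by
      have h2 : ∑ i, (-(c i) * (v.1 i : ℝ) / 2 + c i * (v.2 i : ℝ) / 2)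
          = (∑ i, c i * ((v.2 i : ℝ) - (v.1 i : ℝ))) / 2 := by
        rw [Finset.sum_div]
        exact Finset.sum_congr rfl fun i _ => by ring
      simp only [hval]
      rw [h2]; ring
    have h3 : eR (u / 2 + ∑ i, (-(c i) * (v.1 i : ℝ) / 2 + c i * (v.2 i : ℝ) / 2))
        = eR (u / 2) * ((∏ i, eR (-(c i) * (v.1 i : ℝ) / 2)) *
            ∏ i, eR (c i * (v.2 i : ℝ) / 2)) := by
      rw [e_add, ofReal_exp_sum]
      congr 1
      rw [← Finset.prod_mul_distrib]
      exact Finset.prod_congr rfl fun i _ => e_add _ _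
    rw [h1, h3]
    simp only [hF, hG, Finset.prod_mul_distrib]
    ring
  -- Step 5: Poisson mgf sums
  have hFsum : ∀ i, ∑' k, F i k
      = ENNReal.ofReal (Real.exp (Real.sqrt (a i) * Real.sqrt (b i) - a i)) := by
    intro i
    have h0 : Real.sqrt (a i) ≠ 0 := ne_of_gt (Real.sqrt_pos.2 (ha i))
    have hmul : Real.sqrt (a i) * Real.sqrt (a i) = a i := Real.mul_self_sqrt (ha i).le
    have hr : Real.exp (-(c i) / 2) = Real.sqrt (b i) / Real.sqrt (a i) := by
      have hlog : -(c i) = Real.log (b i / a i) := by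
        simp only [hc]
        rw [← Real.log_inv, inv_div]
      have hba : 0 < b i / a i := div_pos (hb i) (ha i)
      rw [hlog, show Real.log (b i / a i) / 2 = Real.log (b i / a i) * (1 / 2 : ℝ) by ring,
        ← Real.rpow_def_of_pos hba, ← Real.sqrt_eq_rpow, Real.sqrt_div' (b i) (ha i).le]
    have hFk : ∀ k : ℕ, F i k
        = ENNReal.ofReal (Real.exp (-(a i)) * (a i) ^ k / (Nat.factorial k)) *
          ENNReal.ofReal ((Real.sqrt (b i) / Real.sqrt (a i)) ^ k) := by
      intro k
      simp only [hF, heR]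
      rw [mul_comm]
      congr 2
      rw [show -(c i) * (k : ℝ) / 2 = (k : ℝ) * (-(c i) / 2) by ring,
        Real.exp_nat_mul, hr]
    rw [tsum_congr hFk, poisson_mgf _ _ (ha i).le (by positivity)]
    have key : a i * (Real.sqrt (b i) / Real.sqrt (a i)) = Real.sqrt (a i) * Real.sqrt (b i) := by
      rw [mul_div_assoc', div_eq_iff h0]
      linear_combination (-Real.sqrt (b i)) * hmul
    rw [key]
  have hGsum : ∀ i, ∑' k, G i k
      = ENNReal.ofReal (Real.exp (Real.sqrt (a i) * Real.sqrt (b i) - b i)) := by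
    intro i
    have h0 : Real.sqrt (b i) ≠ 0 := ne_of_gt (Real.sqrt_pos.2 (hb i))
    have hmul : Real.sqrt (b i) * Real.sqrt (b i) = b i := Real.mul_self_sqrt (hb i).le
    have hr : Real.exp (c i / 2) = Real.sqrt (a i) / Real.sqrt (b i) := by
      have hab : 0 < a i / b i := div_pos (ha i) (hb i)
      simp only [hc]
      rw [show Real.log (a i / b i) / 2 = Real.log (a i / b i) * (1 / 2 : ℝ) by ring,
        ← Real.rpow_def_of_pos hab, ← Real.sqrt_eq_rpow, Real.sqrt_div' (a i) (hb i).le]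
    have hGk : ∀ k : ℕ, G i k
        = ENNReal.ofReal (Real.exp (-(b i)) * (b i) ^ k / (Nat.factorial k)) *
          ENNReal.ofReal ((Real.sqrt (a i) / Real.sqrt (b i)) ^ k) := by
      intro k
      simp only [hG, heR]
      rw [mul_comm]
      congr 2
      rw [show c i * (k : ℝ) / 2 = (k : ℝ) * (c i / 2) by ring,
        Real.exp_nat_mul, hr]
    rw [tsum_congr hGk, poisson_mgf _ _ (hb i).le (by positivity)]
    have key : b i * (Real.sqrt (a i) / Real.sqrt (b i)) = Real.sqrt (a i) * Real.sqrt (b i) := by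
      rw [mul_div_assoc', div_eq_iff h0]
      linear_combination (-Real.sqrt (a i)) * hmul
    rw [key]
  -- Final chain
  calc P {ω | -u ≤ Y ω} ≤ P (⋃ v, E v) := measure_mono hsub
    _ ≤ ∑' v, P (E v) := measure_iUnion_le E
    _ ≤ ∑' v, eR ((u + val v) / 2) * P (B v) := ENNReal.tsum_le_tsum hEle
    _ = ∑' v : (Fin m → ℕ) × (Fin m → ℕ),
        eR (u / 2) * ((∏ i, F i (v.1 i)) * (∏ i, G i (v.2 i))) := tsum_congr hterm
    _ = eR (u / 2) * ((∑' p : Fin m → ℕ, ∏ i, F i (p i)) *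
        (∑' q : Fin m → ℕ, ∏ i, G i (q i))) := by
      rw [ENNReal.tsum_mul_left]
      congr 1
      rw [ENNReal.tsum_prod']
      calc ∑' (p : Fin m → ℕ) (q : Fin m → ℕ), (∏ i, F i (p i)) * ∏ i, G i (q i)
          = ∑' (p : Fin m → ℕ), (∏ i, F i (p i)) * ∑' (q : Fin m → ℕ), ∏ i, G i (q i) :=
            tsum_congr fun p => ENNReal.tsum_mul_left
        _ = _ := ENNReal.tsum_mul_right
    _ = eR (u / 2) * ((∏ i, ∑' k, F i k) * (∏ i, ∑' k, G i k)) := by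
      rw [tsum_pi_prod, tsum_pi_prod]
    _ = eR (u / 2) * ((∏ i, ENNReal.ofReal (Real.exp (Real.sqrt (a i) * Real.sqrt (b i) - a i))) *
        (∏ i, ENNReal.ofReal (Real.exp (Real.sqrt (a i) * Real.sqrt (b i) - b i)))) := by
      rw [Finset.prod_congr rfl fun i _ => hFsum i, Finset.prod_congr rfl fun i _ => hGsum i]
    _ = ENNReal.ofReal (Real.exp (u / 2) *
        Real.exp (-(∑ i, (Real.sqrt (a i) - Real.sqrt (b i)) ^ 2))) := by
      have h1 : (∏ i, ENNReal.ofReal (Real.exp (Real.sqrt (a i) * Real.sqrt (b i) - a i)))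
          = eR (∑ i, (Real.sqrt (a i) * Real.sqrt (b i) - a i)) := by
        rw [ofReal_exp_sum]
      have h2 : (∏ i, ENNReal.ofReal (Real.exp (Real.sqrt (a i) * Real.sqrt (b i) - b i)))
          = eR (∑ i, (Real.sqrt (a i) * Real.sqrt (b i) - b i)) := by
        rw [ofReal_exp_sum]
      have hsum : (∑ i, (Real.sqrt (a i) * Real.sqrt (b i) - a i)) +
          (∑ i, (Real.sqrt (a i) * Real.sqrt (b i) - b i))
          = -(∑ i, (Real.sqrt (a i) - Real.sqrt (b i)) ^ 2) := by
        rw [← Finset.sum_add_distrib, ← Finset.sum_neg_distrib]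
        refine Finset.sum_congr rfl fun i _ => ?_
        have ha2 := Real.sq_sqrt (ha i).le
        have hb2 := Real.sq_sqrt (hb i).le
        nlinarith [ha2, hb2]
      rw [h1, h2, ← e_add, hsum, ← e_add]
      simp only [heR]
      rw [Real.exp_add, ENNReal.ofReal_mul (Real.exp_nonneg _)]
end

section
/- Let p, q, ψ be real numbers with 0 < q < p < 1 and 0 < ψ ≤ 1. Then −2·log( √(pq)·ψ + √((1 − pψ)(1 − qψ)) ) ≥ ψ·(√p − √q)². -/
/-- For `0 < q < p < 1` and `0 < ψ ≤ 1`,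
`−2·log(√(pq)·ψ + √((1−pψ)(1−qψ))) ≥ ψ·(√p − √q)²`. -/
theorem neg_two_log_ge_hellinger (p q ψ : ℝ)
    (hq : 0 < q) (hqp : q < p) (hp : p < 1) (hψ : 0 < ψ) (hψ1 : ψ ≤ 1) :
    ψ * (Real.sqrt p - Real.sqrt q) ^ 2 ≤
      -2 * Real.log (Real.sqrt (p * q) * ψ
        + Real.sqrt ((1 - p * ψ) * (1 - q * ψ))) := by
  have hp0 : 0 < p := hq.trans hqp
  have ha : 0 < 1 - p * ψ := by nlinarith
  have hb : 0 < 1 - q * ψ := by nlinarith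
  set x := Real.sqrt (p * q) * ψ + Real.sqrt ((1 - p * ψ) * (1 - q * ψ)) with hxdef
  have hsp : Real.sqrt p ^ 2 = p := Real.sq_sqrt hp0.le
  have hsq : Real.sqrt q ^ 2 = q := Real.sq_sqrt hq.le
  have hsp0 : 0 < Real.sqrt p := Real.sqrt_pos.mpr hp0
  have hsq0 : 0 < Real.sqrt q := Real.sqrt_pos.mpr hq
  have hpq : Real.sqrt (p * q) = Real.sqrt p * Real.sqrt q := Real.sqrt_mul hp0.le q
  have hab : Real.sqrt ((1 - p * ψ) * (1 - q * ψ)) ≤ ((1 - p * ψ) + (1 - q * ψ)) / 2 := by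
    rw [Real.sqrt_mul ha.le]
    nlinarith [Real.sq_sqrt ha.le, Real.sq_sqrt hb.le,
      sq_nonneg (Real.sqrt (1 - p * ψ) - Real.sqrt (1 - q * ψ))]
  have hxy : x ≤ 1 - ψ * (Real.sqrt p - Real.sqrt q) ^ 2 / 2 := by
    rw [hxdef, hpq]; nlinarith
  have hy : 0 < 1 - ψ * (Real.sqrt p - Real.sqrt q) ^ 2 / 2 := by nlinarith
  have hx0 : 0 < x := by
    have h1 : 0 < Real.sqrt (p * q) * ψ := by positivity
    have h2 : 0 ≤ Real.sqrt ((1 - p * ψ) * (1 - q * ψ)) := Real.sqrt_nonneg _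
    linarith
  have hlog1 : Real.log x ≤ Real.log (1 - ψ * (Real.sqrt p - Real.sqrt q) ^ 2 / 2) :=
    Real.log_le_log hx0 hxy
  have hlog2 : Real.log (1 - ψ * (Real.sqrt p - Real.sqrt q) ^ 2 / 2) ≤
      (1 - ψ * (Real.sqrt p - Real.sqrt q) ^ 2 / 2) - 1 :=
    Real.log_le_sub_one_of_pos hy
  linarith
end

section
/- Let p, q, ε, ψ be real numbers with 0 < q < p < 1 and 0 < ε ≤ ψ ≤ 1. Then (pψ)^{3/2}/(qψ)^{1/2} + (1 − pψ)^{3/2}/(1 − qψ)^{1/2} ≤ p^{3/2}/q^{1/2} + (1 − pε)^{3/2}/(1 − q)^{1/2}. -/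
/-- For `0 < q < p < 1` and `0 < ε ≤ ψ ≤ 1`,
`(pψ)^{3/2}/(qψ)^{1/2} + (1−pψ)^{3/2}/(1−qψ)^{1/2}
  ≤ p^{3/2}/q^{1/2} + (1−pε)^{3/2}/(1−q)^{1/2}`. -/
theorem renyi_three_half_upper_bound (p q ε ψ : ℝ)
    (hq : 0 < q) (hqp : q < p) (hp : p < 1)
    (hε : 0 < ε) (hεψ : ε ≤ ψ) (hψ1 : ψ ≤ 1) :
    (p * ψ) ^ ((3:ℝ)/2) / (q * ψ) ^ ((1:ℝ)/2)
        + (1 - p * ψ) ^ ((3:ℝ)/2) / (1 - q * ψ) ^ ((1:ℝ)/2) ≤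
      p ^ ((3:ℝ)/2) / q ^ ((1:ℝ)/2)
        + (1 - p * ε) ^ ((3:ℝ)/2) / (1 - q) ^ ((1:ℝ)/2) := by
  have hψ : 0 < ψ := lt_of_lt_of_le hε hεψ
  have hp0 : 0 < p := hq.trans hqp
  have h1 : (p * ψ) ^ ((3:ℝ)/2) / (q * ψ) ^ ((1:ℝ)/2)
      = p ^ ((3:ℝ)/2) / q ^ ((1:ℝ)/2) * ψ := by
    rw [Real.mul_rpow hp0.le hψ.le, Real.mul_rpow hq.le hψ.le,
      mul_div_mul_comm, ← Real.rpow_sub hψ]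
    norm_num
  have hψpow : ψ ^ ((3:ℝ)/2) / ψ ^ ((1:ℝ)/2) = ψ := by
    rw [← Real.rpow_sub hψ]; norm_num
  have hA : (p * ψ) ^ ((3:ℝ)/2) / (q * ψ) ^ ((1:ℝ)/2)
      ≤ p ^ ((3:ℝ)/2) / q ^ ((1:ℝ)/2) := by
    rw [h1]
    nth_rewrite 2 [← mul_one (p ^ ((3:ℝ)/2) / q ^ ((1:ℝ)/2))]
    exact mul_le_mul_of_nonneg_left hψ1
      (div_nonneg (Real.rpow_nonneg hp0.le _) (Real.rpow_nonneg hq.le _))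
  have hB : (1 - p * ψ) ^ ((3:ℝ)/2) / (1 - q * ψ) ^ ((1:ℝ)/2)
      ≤ (1 - p * ε) ^ ((3:ℝ)/2) / (1 - q) ^ ((1:ℝ)/2) := by
    have hpψ : 0 ≤ 1 - p * ψ := by nlinarith
    have hq1 : (0:ℝ) < 1 - q := by linarith
    have hnum : 1 - p * ψ ≤ 1 - p * ε := by nlinarith
    have hden : 1 - q ≤ 1 - q * ψ := by nlinarith
    exact div_le_div₀ (Real.rpow_nonneg (by nlinarith) _)
      (Real.rpow_le_rpow hpψ hnum (by norm_num))
      (Real.rpow_pos_of_pos hq1 _)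
      (Real.rpow_le_rpow hq1.le hden (by norm_num))
  linarith
end
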